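/- For every rational number u, setting a = u² − 1, p = u·(u⁴ − 1), q = 2u² − 1, r = u⁴ − u² + 1, s = u·(2u² − 1), one has (p + q)⁴ + a·(r − s)⁴ = (p − q)⁴ + a·(r + s)⁴. -/
import Mathlib


theorem stmt_11 (u : ℚ) (a p q r s : ℚ)
    (ha : a = u ^ 2 - 1) (hp : p = u * (u ^ 4 - 1)) (hq : q = 2 * u ^ 2 - 1)
    (hr : r = u ^ 4 - u ^ 2 + 1) (hs : s = u * (2 * u ^ 2 - 1)) :
    (p + q) ^ 4 + a * (r - s) ^ 4 = (p - q) ^ 4 + a * (r + s) ^ 4 := by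
  subst ha hp hq hr hs; ring
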